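/- Let q be an odd prime power, k ∈ F_q^×, and i, j ∈ F_q. Fix x = (0,0) and y ∈ F_q² with y₁² + y₂² = k. Then the number of z ∈ F_q² with z₁² + z₂² = i and (z₁−y₁)² + (z₂−y₂)² = j equals ((4σ₂ − σ₁²) | q) + 1, where σ₁ = i + j + k, σ₂ = ij + jk + ki, and (·|q) is the quadratic character of F_q (with (0|q) = 0). In particular this count is independent of the choice of y with Q(y) = k. -/

import Mathlib

open Finset

/-- Intersection numbers of the planar Euclidean scheme: for k ≠ 0 and y with Q(y) = k,
the number of z with Q(z) = i and Q(z − y) = j is ((4σ₂ − σ₁²)|q) + 1. -/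
theorem planar_intersection_numbers
    (F : Type*) [Field F] [Fintype F] [DecidableEq F]
    (hodd : Odd (Fintype.card F))
    (i j k : F) (hk : k ≠ 0) (y : F × F) (hy : y.1 ^ 2 + y.2 ^ 2 = k) :
    ((univ.filter (fun z : F × F =>
        z.1 ^ 2 + z.2 ^ 2 = i ∧ (z.1 - y.1) ^ 2 + (z.2 - y.2) ^ 2 = j)).card : ℤ)
      = quadraticChar F (4 * (i * j + j * k + k * i) - (i + j + k) ^ 2) + 1 := by
  have hchar : ringChar F ≠ 2 := by
    intro h
    have := FiniteField.even_card_of_char_two h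
    rcases hodd with ⟨m, hm⟩
    omega
  have h2 : (2 : F) ≠ 0 := Ring.two_ne_zero hchar
  obtain ⟨c, hc⟩ : ∃ c : F, c = (i + k - j) / 2 := ⟨_, rfl⟩
  obtain ⟨s, hs⟩ : ∃ s : F, s = (i * k - c ^ 2) / k ^ 2 := ⟨_, rfl⟩
  have key : (univ.filter (fun z : F × F =>
        z.1 ^ 2 + z.2 ^ 2 = i ∧ (z.1 - y.1) ^ 2 + (z.2 - y.2) ^ 2 = j)).card
      = (univ.filter (fun t : F => t ^ 2 = s)).card := by
    apply Finset.card_nbij' (i := fun z => (z.2 * y.1 - z.1 * y.2) / k)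
      (j := fun t => (c * y.1 / k - t * y.2, c * y.2 / k + t * y.1))
    · intro z hz
      simp only [mem_coe, mem_filter, mem_univ, true_and] at hz ⊢
      obtain ⟨h1, h2'⟩ := hz
      have hdot : z.1 * y.1 + z.2 * y.2 = c := by
        rw [hc]; field_simp; linear_combination h1 + hy - h2'
      have hcross : (z.2 * y.1 - z.1 * y.2) ^ 2 = i * k - c ^ 2 := by
        linear_combination (y.1 ^ 2 + y.2 ^ 2) * h1 + i * hy
          - (z.1 * y.1 + z.2 * y.2 + c) * hdot
      rw [hs, div_pow, hcross]
    · intro t ht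
      simp only [mem_coe, mem_filter, mem_univ, true_and] at ht ⊢
      constructor
      · have expand1 : (c * y.1 / k - t * y.2) ^ 2 + (c * y.2 / k + t * y.1) ^ 2
            = (c ^ 2 / k ^ 2 + t ^ 2) * (y.1 ^ 2 + y.2 ^ 2) := by ring
        rw [expand1, hy, ht, hs]; field_simp; ring
      · have expand2 : (c * y.1 / k - t * y.2 - y.1) ^ 2 + (c * y.2 / k + t * y.1 - y.2) ^ 2
            = ((c / k - 1) ^ 2 + t ^ 2) * (y.1 ^ 2 + y.2 ^ 2) := by ring
        rw [expand2, hy, ht, hs, hc]; field_simp; ring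
    · intro z hz
      simp only [mem_coe, mem_filter, mem_univ, true_and] at hz
      obtain ⟨h1, h2'⟩ := hz
      have hdot : z.1 * y.1 + z.2 * y.2 = c := by
        rw [hc]; field_simp; linear_combination h1 + hy - h2'
      have e1 : c * y.1 / k - (z.2 * y.1 - z.1 * y.2) / k * y.2 = z.1 := by
        field_simp; linear_combination z.1 * hy - y.1 * hdot
      have e2 : c * y.2 / k + (z.2 * y.1 - z.1 * y.2) / k * y.1 = z.2 := by
        field_simp; linear_combination z.2 * hy - y.2 * hdot
      exact Prod.ext e1 e2
    · intro t ht
      field_simp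
      linear_combination t * k * hy
  rw [key]
  have hset : (univ.filter (fun t : F => t ^ 2 = s)) = {x : F | x ^ 2 = s}.toFinset := by
    ext x; simp
  rw [hset, quadraticChar_card_sqrts hchar]
  have hD : 4 * (i * j + j * k + k * i) - (i + j + k) ^ 2 = s * (2 * k) ^ 2 := by
    rw [hs, hc]; field_simp; ring
  rw [hD, map_mul, quadraticChar_sq_one' (mul_ne_zero h2 hk), mul_one]
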